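/- Let Q(x,y,z) = x(x−y)(x+y−z), a polynomial function on ℂ³. Then the polar curve Γ = {(x,y,z) ∈ ℂ³ : ∂Q/∂x = 0, ∂Q/∂y = 0, Q ≠ 0} is exactly the punctured line {(s, 3s, 6s) : s ∈ ℂ, s ≠ 0}; equivalently, Γ is the set of points with y = 3x, z = 2y and Q ≠ 0. -/

import Mathlib

lemma derivX (a b c : ℂ) :
    deriv (fun x : ℂ => x * (x - a) * (x + a - b)) c
      = 3 * c ^ 2 - 2 * c * b - a ^ 2 + a * b := by
  have h : HasDerivAt (fun x : ℂ => x * (x - a) * (x + a - b))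
      (3 * c ^ 2 - 2 * c * b - a ^ 2 + a * b) c := by
    have := (((hasDerivAt_id c).fun_mul ((hasDerivAt_id c).sub_const a)).fun_mul
      (((hasDerivAt_id c).add_const a).sub_const b))
    refine this.congr_deriv ?_
    simp only [id]
    ring
  exact h.deriv

lemma derivY (x b c : ℂ) :
    deriv (fun y : ℂ => x * (x - y) * (x + y - b)) c
      = x * (b - 2 * c) := by
  have h : HasDerivAt (fun y : ℂ => x * (x - y) * (x + y - b))
      (x * (b - 2 * c)) c := by
    have := (((hasDerivAt_const c x).fun_mul ((hasDerivAt_const c x).fun_sub (hasDerivAt_id c))).fun_mul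
      (((hasDerivAt_const c x).fun_add (hasDerivAt_id c)).sub_const b))
    refine this.congr_deriv ?_
    simp only [id]
    ring
  exact h.deriv

/-- For `Q(x,y,z) = x(x−y)(x+y−z)` on `ℂ³`, the polar curve
`Γ = {∂Q/∂x = 0, ∂Q/∂y = 0, Q ≠ 0}` is exactly the punctured line
`{(s, 3s, 6s) : s ≠ 0}`; equivalently, it is the set of points with `y = 3x`, `z = 2y`
and `Q ≠ 0`. -/
theorem polar_curve_of_example_arrangement :
    {p : ℂ × ℂ × ℂ |
        deriv (fun x : ℂ => x * (x - p.2.1) * (x + p.2.1 - p.2.2)) p.1 = 0 ∧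
        deriv (fun y : ℂ => p.1 * (p.1 - y) * (p.1 + y - p.2.2)) p.2.1 = 0 ∧
        p.1 * (p.1 - p.2.1) * (p.1 + p.2.1 - p.2.2) ≠ 0} =
      {p : ℂ × ℂ × ℂ | ∃ s : ℂ, s ≠ 0 ∧ p = (s, 3 * s, 6 * s)} ∧
    {p : ℂ × ℂ × ℂ |
        deriv (fun x : ℂ => x * (x - p.2.1) * (x + p.2.1 - p.2.2)) p.1 = 0 ∧
        deriv (fun y : ℂ => p.1 * (p.1 - y) * (p.1 + y - p.2.2)) p.2.1 = 0 ∧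
        p.1 * (p.1 - p.2.1) * (p.1 + p.2.1 - p.2.2) ≠ 0} =
      {p : ℂ × ℂ × ℂ | p.2.1 = 3 * p.1 ∧ p.2.2 = 2 * p.2.1 ∧
        p.1 * (p.1 - p.2.1) * (p.1 + p.2.1 - p.2.2) ≠ 0} := by
  have key : ∀ p : ℂ × ℂ × ℂ,
      (deriv (fun x : ℂ => x * (x - p.2.1) * (x + p.2.1 - p.2.2)) p.1 = 0 ∧
        deriv (fun y : ℂ => p.1 * (p.1 - y) * (p.1 + y - p.2.2)) p.2.1 = 0 ∧
        p.1 * (p.1 - p.2.1) * (p.1 + p.2.1 - p.2.2) ≠ 0) ↔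
      (p.2.1 = 3 * p.1 ∧ p.2.2 = 2 * p.2.1 ∧
        p.1 * (p.1 - p.2.1) * (p.1 + p.2.1 - p.2.2) ≠ 0) := by
    rintro ⟨x, y, z⟩
    simp only [derivX, derivY]
    constructor
    · rintro ⟨h1, h2, hQ⟩
      have hx : x ≠ 0 := by
        intro h; apply hQ; rw [h]; ring
      have hz : z = 2 * y := by
        rcases mul_eq_zero.mp h2 with h | h
        · exact absurd h hx
        · linear_combination h
      subst hz
      have hxy : x ≠ y := by
        intro h; apply hQ; rw [h]; ring
      have hfac : (3 * x - y) * (x - y) = 0 := by linear_combination h1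
      rcases mul_eq_zero.mp hfac with h | h
      · exact ⟨by linear_combination -h, rfl, hQ⟩
      · exact absurd (by linear_combination h) hxy
    · rintro ⟨hy, hz, hQ⟩
      subst hy; subst hz
      refine ⟨by ring, by ring, hQ⟩
  constructor
  · ext ⟨x, y, z⟩
    rw [Set.mem_setOf_eq, Set.mem_setOf_eq, key]
    constructor
    · rintro ⟨hy, hz, hQ⟩
      simp only at hy hz hQ
      refine ⟨x, fun h => hQ (by rw [h]; ring), ?_⟩
      simp only [Prod.mk.injEq]
      exact ⟨trivial, hy, by rw [hz, hy]; ring⟩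
    · rintro ⟨s, hs, h⟩
      simp only [Prod.mk.injEq] at h
      obtain ⟨h1, h2, h3⟩ := h
      subst h1; subst h2; subst h3
      refine ⟨rfl, by ring, ?_⟩
      simp only
      intro h
      rcases mul_eq_zero.mp h with h | h
      · rcases mul_eq_zero.mp h with h | h
        · exact hs h
        · exact hs (by linear_combination -(1/2) * h)
      · exact hs (by linear_combination -(1/2) * h)
  · ext ⟨x, y, z⟩
    exact key ⟨x, y, z⟩
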